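/- Let (A, α, L) be an Exel system with A unital and L(1) = 1, and let M_L be the associated right Hilbert A-module with inner product ⟨q(a), q(b)⟩ = L(a* b), right action q(a)·b = q(a α(b)), and q : A → M_L the canonical map with dense range. Then the map U : A → M_L determined by U(a) = q(α(a)) is an inner-product-preserving (isometric) adjointable map whose adjoint satisfies U*(q(a)) = L(a) for all a ∈ A; in particular ⟨U(a), U(b)⟩ = a* b and ‖L(b)‖ ≤ ‖q(b)‖ for all b ∈ A. -/

import Mathlib

open scoped RightActions

/-- The December 2024 Mathlib `CStarModule` (right `A`-module via `Aᵐᵒᵖ`), whose meaning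
the current Mathlib class no longer has (it is now a left module). -/
class CStarModuleRight (A E : Type*) [NonUnitalSemiring A] [StarRing A] [Module ℂ A]
    [AddCommGroup E] [Module ℂ E] [PartialOrder A] [SMul Aᵐᵒᵖ E] [Norm A] [Norm E]
    extends Inner A E where
  inner_add_right {x} {y} {z} : inner x (y + z) = inner x y + inner x z
  inner_self_nonneg {x} : 0 ≤ inner x x
  inner_self {x} : inner x x = 0 ↔ x = 0
  inner_op_smul_right {a : A} {x y : E} : inner x (y <• a) = inner x y * a
  inner_smul_right_complex {z : ℂ} {x} {y} : inner x (z • y) = z • inner x y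
  star_inner x y : star (inner x y) = inner y x
  norm_eq_sqrt_norm_inner_self x : ‖x‖ = Real.sqrt ‖inner x x‖

namespace CSRight

variable {A E : Type*} [CStarAlgebra A] [PartialOrder A] [StarOrderedRing A]
  [NormedAddCommGroup E] [NormedSpace ℂ E] [SMul Aᵐᵒᵖ E] [CStarModuleRight A E]

/-- The inner product as a linear map in the second variable. -/
def innerLin (x : E) : E →ₗ[ℂ] A where
  toFun y := inner A x y
  map_add' _ _ := CStarModuleRight.inner_add_right
  map_smul' _ _ := CStarModuleRight.inner_smul_right_complex

lemma innerLin_apply (x y : E) : innerLin (A := A) x y = inner A x y := rfl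

lemma inner_sub_right {x y z : E} : inner A x (y - z) = inner A x y - inner A x z := by
  simp only [← innerLin_apply, map_sub]

lemma inner_zero_left {y : E} : inner A (0 : E) y = 0 := by
  rw [← CStarModuleRight.star_inner y, ← innerLin_apply, map_zero, star_zero]

lemma inner_sub_left {x y z : E} : inner A (x - y) z = inner A x z - inner A y z := by
  rw [← CStarModuleRight.star_inner z, inner_sub_right, star_sub,
    CStarModuleRight.star_inner, CStarModuleRight.star_inner]

lemma inner_op_smul_left {a : A} {x y : E} : inner A (x <• a) y = star a * inner A x y := by
  rw [← CStarModuleRight.star_inner y, CStarModuleRight.inner_op_smul_right, star_mul,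
    CStarModuleRight.star_inner]

lemma inner_smul_right_real {r : ℝ} {x y : E} : inner A x (r • y) = r • inner A x y := by
  rw [← Complex.coe_smul, CStarModuleRight.inner_smul_right_complex, Complex.coe_smul]

lemma inner_smul_left_real {r : ℝ} {x y : E} : inner A (r • x) y = r • inner A x y := by
  rw [← CStarModuleRight.star_inner y, inner_smul_right_real, star_smul, star_trivial,
    CStarModuleRight.star_inner]

lemma norm_inner_le (x y : E) : ‖(inner A x y : A)‖ ≤ ‖x‖ * ‖y‖ := by
  rcases eq_or_ne x 0 with h | h
  · rw [h, inner_zero_left, norm_zero]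
    positivity
  set r : ℝ := ‖x‖ ^ 2 with hr
  have hrpos : 0 < r := pow_pos (norm_pos_iff.mpr h) 2
  have hxx : ‖(inner A x x : A)‖ = r := by
    rw [hr, CStarModuleRight.norm_eq_sqrt_norm_inner_self (A := A) x, Real.sq_sqrt (norm_nonneg _)]
  set a : A := inner A x y with ha
  have hsa : star a = inner A y x := CStarModuleRight.star_inner x y
  have h1 : (0 : A) ≤ r • (star a * a) - r • (star a * a) - r • (star a * a)
      + r • (r • (inner A y y : A)) := by
    calc (0 : A) ≤ inner A (x <• a - r • y) (x <• a - r • y) :=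
          CStarModuleRight.inner_self_nonneg
      _ = star a * inner A x x * a - r • (star a * a) - r • (star a * a)
            + r • (r • (inner A y y : A)) := by
          simp only [inner_sub_right, inner_sub_left, CStarModuleRight.inner_op_smul_right,
            inner_op_smul_left, inner_smul_right_real, inner_smul_left_real, ← ha, hsa,
            mul_smul_comm, smul_mul_assoc, mul_assoc, mul_sub, sub_mul, smul_sub]
          abel
      _ ≤ _ := by
          gcongr
          calc star a * inner A x x * a ≤ ‖(inner A x x : A)‖ • (star a * a) :=
                CStarAlgebra.star_left_conjugate_le_norm_smul (hb := CStarModuleRight.star_inner x x)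
            _ = r • (star a * a) := by rw [hxx]
  have h2 : star a * a ≤ r • (inner A y y : A) := by
    have h3 : r • (star a * a) ≤ r • (r • (inner A y y : A)) := by
      have := h1
      rw [sub_self, zero_sub, le_neg_add_iff_add_le, add_zero] at this
      exact this
    exact (smul_le_smul_iff_of_pos_left hrpos).mp h3
  have h4 : ‖a‖ ^ 2 ≤ (‖x‖ * ‖y‖) ^ 2 := by
    calc ‖a‖ ^ 2 = ‖star a * a‖ := by rw [CStarRing.norm_star_mul_self, pow_two]
      _ ≤ ‖r • (inner A y y : A)‖ :=
          CStarAlgebra.norm_le_norm_of_nonneg_of_le (star_mul_self_nonneg a) h2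
      _ = r * ‖(inner A y y : A)‖ := by rw [norm_smul, Real.norm_of_nonneg hrpos.le]
      _ = (‖x‖ * ‖y‖) ^ 2 := by
          rw [CStarModuleRight.norm_eq_sqrt_norm_inner_self (A := A) y, hr, mul_pow,
            Real.sq_sqrt (norm_nonneg _)]
  exact (pow_le_pow_iff_left₀ (norm_nonneg a) (by positivity) (by norm_num)).mp h4

/-- The inner product with a fixed vector, as a continuous linear map. -/
noncomputable def innerSLR (x : E) : E →L[ℂ] A :=
  (innerLin (A := A) x).mkContinuous ‖x‖ (fun y => norm_inner_le x y)

lemma innerSLR_apply {x y : E} : innerSLR (A := A) x y = inner A x y := rfl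

end CSRight

theorem exel_module_isometry_adjointable
    {A M : Type*} [CStarAlgebra A] [PartialOrder A] [StarOrderedRing A]
    [NormedAddCommGroup M] [NormedSpace ℂ M] [CompleteSpace M]
    [SMul Aᵐᵒᵖ M] [CStarModuleRight A M]
    (α : A →⋆ₐ[ℂ] A) (L : A →ₗ[ℂ] A)
    (hpos : ∀ a : A, 0 ≤ a → 0 ≤ L a)
    (htrans : ∀ a b : A, L (α a * b) = a * L b)
    (hunital : L 1 = 1)
    (q : A →ₗ[ℂ] M) (hdense : DenseRange q)
    (hq_inner : ∀ a b : A, (inner A (q a) (q b) : A) = L (star a * b))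
    (hq_smul : ∀ a b : A, (q a : M) <• b = q (a * α b)) :
    (∀ a b : A, (inner A (q (α a)) (q (α b)) : A) = star a * b) ∧
    (∀ b : A, ‖L b‖ ≤ ‖q b‖) ∧
    (∃ T : M →L[ℂ] A,
      (∀ a : A, T (q a) = L a) ∧
      (∀ (a : A) (m : M), (inner A (q (α a)) m : A) = star a * T m)) := by
  have hLα : ∀ a : A, L (α a) = a := by
    intro a
    have := htrans a 1
    simpa [hunital] using this
  have hone : ‖(1 : A)‖ ≤ 1 := by
    have h := CStarRing.norm_star_mul_self (x := (1 : A))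
    simp only [star_one, one_mul] at h
    nlinarith [norm_nonneg (1 : A)]
  have hq1 : ‖q (1 : A)‖ ≤ 1 := by
    have h : ‖q (1 : A)‖ = Real.sqrt ‖(inner A (q 1) (q 1) : A)‖ :=
      CStarModuleRight.norm_eq_sqrt_norm_inner_self (q (1 : A))
    rw [h, hq_inner]
    simp only [star_one, one_mul, hunital]
    calc Real.sqrt ‖(1 : A)‖ ≤ Real.sqrt 1 := Real.sqrt_le_sqrt hone
      _ = 1 := Real.sqrt_one
  have key : ∀ a b : A, (inner A (q (α a)) (q b) : A) = star a * L b := by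
    intro a b
    rw [hq_inner, show star (α a) * b = α (star a) * b by rw [map_star], htrans]
  refine ⟨?_, ?_, ?_⟩
  · intro a b
    rw [key, hLα]
  · intro b
    have h1 : L b = (inner A (q 1) (q b) : A) := by rw [hq_inner]; simp
    rw [h1]
    calc ‖(inner A (q 1) (q b) : A)‖ ≤ ‖q (1:A)‖ * ‖q b‖ := CSRight.norm_inner_le _ _
      _ ≤ 1 * ‖q b‖ := by gcongr
      _ = ‖q b‖ := one_mul _
  · refine ⟨CSRight.innerSLR (A := A) (q 1), ?_, ?_⟩
    · intro a
      rw [CSRight.innerSLR_apply, hq_inner]; simp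
    · intro a m
      have hc : Continuous fun m : M => (inner A (q (α a)) m : A) :=
        (CSRight.innerSLR (A := A) (q (α a))).continuous
      have hc2 : Continuous fun m : M =>
          star a * (CSRight.innerSLR (A := A) (q 1) m : A) :=
        (continuous_mul_left (star a)).comp
          (CSRight.innerSLR (A := A) (q 1)).continuous
      refine DenseRange.induction_on hdense m ?_ ?_
      · exact isClosed_eq hc hc2
      · intro b
        rw [key, CSRight.innerSLR_apply, hq_inner]
        simp
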